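/- Let Δ ⊆ [n] be a nonempty finite set with maximal block decomposition and the associated partition Δ = A(Δ) ⊔ B(Δ) ⊔ C(Δ) defined recursively as in the context. Then |A(Δ)| = a(Δ), |B(Δ)| = 2·b(Δ), and |C(Δ)| = 3·c(Δ), where a(Δ), b(Δ), c(Δ) are the invariants defined from the extended-block decomposition. -/

import Mathlib

/-- Group a sorted list of naturals into maximal runs of consecutive integers
(the maximal block decomposition). -/
def runs : List ℕ → List (List ℕ)
  | [] => []
  | x :: xs =>
    match runs xs with
    | (y :: ys) :: rest => if x + 1 = y then (x :: y :: ys) :: rest else [x] :: (y :: ys) :: rest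
    | l => [x] :: l

/-- For each maximal block, record (min, max, cardinality mod 3). -/
def blockData (l : List ℕ) : List (ℕ × ℕ × ℕ) :=
  (runs l).map (fun b => (b.headI, (b.getLast?).getD 0, b.length % 3))

/-- Fold over the list of blocks, grouping consecutive gluable type-1/type-2 blocks into
maximal extended blocks; the state `(t, s)` counts type-1/type-2 blocks of the current
extended block and `prev` records the max of the previous block if it can be glued onto.
Each finished extended block with `t` type-1 and `s` type-2 blocks contributes
`t % 2` to `a` and `s + (t - t % 2) / 2` to `b`; the result is `(a, b)`. -/
def go : List (ℕ × ℕ × ℕ) → ℕ → ℕ → Option ℕ → ℕ × ℕ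
  | [], t, s, _ => (t % 2, s + (t - t % 2) / 2)
  | (m, mx, ty) :: rest, t, s, prev =>
    if ty = 0 then
      let r := go rest 0 0 none
      (r.1 + t % 2, r.2 + s + (t - t % 2) / 2)
    else if prev = some (m - 2) ∧ 2 ≤ m then
      go rest (t + if ty = 1 then 1 else 0) (s + if ty = 2 then 1 else 0) (some mx)
    else
      let r := go rest (if ty = 1 then 1 else 0) (if ty = 2 then 1 else 0) (some mx)
      (r.1 + t % 2, r.2 + s + (t - t % 2) / 2)

/-- The invariant `a(Δ)`. -/
def aF (Δ : Finset ℕ) : ℕ := (go (blockData (Δ.sort (· ≤ ·))) 0 0 none).1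

/-- The invariant `b(Δ)`. -/
def bF (Δ : Finset ℕ) : ℕ := (go (blockData (Δ.sort (· ≤ ·))) 0 0 none).2

/-- The invariant `c(Δ) = (|Δ| - a(Δ) - 2 b(Δ)) / 3`. -/
def cF (Δ : Finset ℕ) : ℕ := (Δ.card - aF Δ - 2 * bF Δ) / 3

/-- The invariant `k(Δ) = a(Δ) + b(Δ) + c(Δ)`. -/
def kF (Δ : Finset ℕ) : ℕ := aF Δ + bF Δ + cF Δ

/-- The piecewise function `d(Δ, t)` of the paper. -/
def dF (Δ : Finset ℕ) (t : ℕ) : ℕ :=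
  if t ≤ aF Δ then kF Δ + 2 - t
  else if t ≤ aF Δ + 2 * bF Δ then kF Δ + 1 - (t + aF Δ - 1) / 2
  else if t ≤ Δ.card then kF Δ + 1 - (t + 2 * aF Δ + bF Δ - 1) / 3
  else 1

/-- The recursive construction of the pair `(A(Δ), B(Δ))` from the list of maximal
blocks of `Δ` (each block a list of consecutive integers, in increasing order). -/
def ABgo : List (List ℕ) → Finset ℕ × Finset ℕ
  | [] => (∅, ∅)
  | [b1] =>
    if b1.length % 3 = 1 then ({(b1.getLast?).getD 0}, ∅)
    else if b1.length % 3 = 2 then (∅, {(b1.getLast?).getD 0 - 1, (b1.getLast?).getD 0})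
    else (∅, ∅)
  | b1 :: b2 :: rest =>
    let ty := b1.length % 3
    let n1 := (b1.getLast?).getD 0
    if ty = 0 then ABgo (b2 :: rest)
    else if ty = 2 then
      let r := ABgo (b2 :: rest)
      (r.1, r.2 ∪ {n1 - 1, n1})
    else if b2.headI = n1 + 2 ∧ b2.length % 3 ≠ 0 then
      let r := ABgo (b2.drop 1 :: rest)
      (r.1, r.2 ∪ {n1, b2.headI})
    else
      let r := ABgo (b2 :: rest)
      (r.1 ∪ {n1}, r.2)
termination_by l => (l.map (fun b => b.length + 1)).sum
decreasing_by all_goals simp [List.length_drop] <;> omega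

/-- The set `A(Δ)`. -/
def AF (Δ : Finset ℕ) : Finset ℕ := (ABgo (runs (Δ.sort (· ≤ ·)))).1

/-- The set `B(Δ)`. -/
def BF (Δ : Finset ℕ) : Finset ℕ := (ABgo (runs (Δ.sort (· ≤ ·)))).2

/-- The set `C(Δ) = Δ \ (A(Δ) ∪ B(Δ))`. -/
def CF (Δ : Finset ℕ) : Finset ℕ := Δ \ (AF Δ ∪ BF Δ)

lemma getLast?_range' (m k : ℕ) : (List.range' m (k+1)).getLast? = some (m+k) := by
  induction k generalizing m with
  | zero => simp
  | succ k ih =>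
    rw [List.range'_succ, List.range'_succ, List.getLast?_cons_cons, ← List.range'_succ, ih]
    congr 1; omega

lemma go_norm (X : List (ℕ × ℕ × ℕ)) : ∀ t s p, go X t s p =
    ((go X (t%2) 0 p).1, (go X (t%2) 0 p).2 + s + (t - t%2)/2) := by
  induction X with
  | nil => intro t s p; simp only [go]; refine Prod.ext ?_ ?_ <;> simp <;> omega
  | cons d X ih =>
    rintro t s p
    obtain ⟨m, mx, ty⟩ := d
    by_cases h0 : ty = 0
    · simp only [go, h0, if_pos rfl]
      refine Prod.ext ?_ ?_ <;> simp <;> omega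
    · by_cases hg : p = some (m - 2) ∧ 2 ≤ m
      · simp only [go, if_neg h0, if_pos hg]
        rw [ih (t + if ty = 1 then 1 else 0), ih (t % 2 + if ty = 1 then 1 else 0)]
        by_cases h1 : ty = 1
        · subst h1
          simp only [reduceIte]
          have e : (t + 1) % 2 = (t % 2 + 1) % 2 := by omega
          rw [e]
          refine Prod.ext ?_ ?_ <;> simp <;> omega
        · simp only [if_neg h1]
          have e : (t + 0) % 2 = (t % 2 + 0) % 2 := by omega
          rw [e]
          refine Prod.ext ?_ ?_ <;> simp <;> omega
      · simp only [go, if_neg h0, if_neg hg]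
        refine Prod.ext ?_ ?_ <;> simp <;> omega

lemma go_zero (X : List (ℕ × ℕ × ℕ)) (p : Option ℕ) : go X 0 0 p = go X 0 0 none := by
  cases X with
  | nil => rfl
  | cons d X =>
    obtain ⟨m, mx, ty⟩ := d
    by_cases h0 : ty = 0
    · simp only [go, if_pos h0]
    · by_cases hg : p = some (m - 2) ∧ 2 ≤ m
      · have hg' : ¬((none : Option ℕ) = some (m - 2) ∧ 2 ≤ m) := by simp
        simp only [go, if_neg h0, if_pos hg, if_neg hg']
        rw [go_norm X (0 + if ty = 1 then 1 else 0),
          go_norm X (if ty = 1 then 1 else 0) (if ty = 2 then 1 else 0)]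
        by_cases h1 : ty = 1 <;> simp [h1]
      · have hg' : ¬((none : Option ℕ) = some (m - 2) ∧ 2 ≤ m) := by simp
        simp only [go, if_neg h0, if_neg hg, if_neg hg']

lemma runs_flatten (l : List ℕ) : (runs l).flatten = l := by
  induction l with
  | nil => rfl
  | cons x xs ih =>
    show (match runs xs with
    | (y :: ys) :: rest => if x + 1 = y then (x :: y :: ys) :: rest else [x] :: (y :: ys) :: rest
    | l => [x] :: l).flatten = x :: xs
    match h : runs xs with
    | [] => simp_all
    | [] :: rest => simp_all
    | (y :: ys) :: rest =>
      rw [h] at ih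
      by_cases hxy : x + 1 = y <;> simp_all

lemma runs_ne_nil (l : List ℕ) : [] ∉ runs l := by
  induction l with
  | nil => simp [runs]
  | cons x xs ih =>
    show [] ∉ (match runs xs with
    | (y :: ys) :: rest => if x + 1 = y then (x :: y :: ys) :: rest else [x] :: (y :: ys) :: rest
    | l => [x] :: l)
    match h : runs xs with
    | [] => simp
    | [] :: rest => exact absurd (h ▸ (List.mem_cons_self : [] ∈ [] :: rest)) ih
    | (y :: ys) :: rest =>
      rw [h] at ih
      by_cases hxy : x + 1 = y <;> simp_all

def Valid : List (List ℕ) → Prop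
  | [] => True
  | b :: rest => (∃ m k, b = List.range' m (k+1)) ∧
      (rest = [] ∨ b.getLast?.getD 0 + 2 ≤ rest.headI.headI) ∧ Valid rest

lemma valid_runs (l : List ℕ) (hs : l.Pairwise (· < ·)) : Valid (runs l) := by
  induction l with
  | nil => trivial
  | cons x xs ih =>
    have hs' : xs.Pairwise (· < ·) := (List.pairwise_cons.mp hs).2
    have hlt : ∀ y ∈ xs, x < y := (List.pairwise_cons.mp hs).1
    have hv := ih hs'
    have hfl := runs_flatten xs
    show Valid (match runs xs with
    | (y :: ys) :: rest => if x + 1 = y then (x :: y :: ys) :: rest else [x] :: (y :: ys) :: rest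
    | l => [x] :: l)
    match h : runs xs with
    | [] => exact ⟨⟨x, 0, rfl⟩, Or.inl rfl, trivial⟩
    | [] :: rest => exact absurd (h ▸ (List.mem_cons_self : [] ∈ [] :: rest)) (runs_ne_nil xs)
    | (y :: ys) :: rest =>
      rw [h] at hv hfl
      obtain ⟨⟨m, k, hb⟩, hgap, hvr⟩ := hv
      have hym : y = m := by
        have : (y :: ys).headI = (List.range' m (k+1)).headI := by rw [hb]
        simpa [List.range'_succ] using this
      subst hym
      change Valid (if x + 1 = y then (x :: y :: ys) :: rest else [x] :: (y :: ys) :: rest)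
      have hy_mem : y ∈ xs := by
        rw [← hfl]; simp
      have hxy_lt : x < y := hlt y hy_mem
      by_cases hxy : x + 1 = y
      · rw [if_pos hxy]
        refine ⟨⟨x, k+1, ?_⟩, ?_, hvr⟩
        · rw [List.range'_succ, hxy, ← hb]
        · rcases hgap with h1 | h1
          · exact Or.inl h1
          · refine Or.inr ?_
            have e1 : (x :: y :: ys).getLast? = (y :: ys).getLast? := List.getLast?_cons_cons ..
            rw [e1]; exact h1
      · rw [if_neg hxy]
        refine ⟨⟨x, 0, rfl⟩, Or.inr ?_, ⟨y, k, hb⟩, hgap, hvr⟩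
        show ([x].getLast?).getD 0 + 2 ≤ (y :: ys).headI
        have e1 : ([x].getLast?).getD 0 = x := rfl
        have e2 : (y :: ys).headI = y := rfl
        omega

lemma valid_lb (L : List (List ℕ)) (h : Valid L) :
    ∀ x ∈ L.flatten, L.headI.headI ≤ x := by
  induction L with
  | nil => simp
  | cons b rest ih =>
    obtain ⟨⟨m, k, hb⟩, hgap, hvr⟩ := h
    intro x hx
    subst hb
    simp only [List.headI, List.range'_succ]
    rw [List.flatten_cons] at hx
    rcases List.mem_append.mp hx with h1 | h1
    · rw [List.range'_succ] at h1
      rcases List.mem_cons.mp h1 with h2 | h2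
      · omega
      · obtain ⟨i, _, rfl⟩ := List.mem_range'.mp h2
        omega
    · have := ih hvr x h1
      rcases hgap with h2 | h2
      · subst h2; simp at h1
      · rw [getLast?_range'] at h2
        simp only [Option.getD] at h2
        omega

def mbd (L : List (List ℕ)) : List (ℕ × ℕ × ℕ) :=
  L.map (fun b => (b.headI, (b.getLast?).getD 0, b.length % 3))

def fgo (L : List (List ℕ)) : ℕ × ℕ := go (mbd L) 0 0 none

lemma mbd_cons (b : List ℕ) (T : List (List ℕ)) :
    mbd (b :: T) = (b.headI, (b.getLast?).getD 0, b.length % 3) :: mbd T := rfl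

lemma fstep (b : List ℕ) (T : List (List ℕ)) (hn : b.length % 3 ≠ 0) :
    fgo (b :: T) = go (mbd T) (if b.length % 3 = 1 then 1 else 0)
      (if b.length % 3 = 2 then 1 else 0) (some ((b.getLast?).getD 0)) := by
  have hg' : ¬((none : Option ℕ) = some (b.headI - 2) ∧ 2 ≤ b.headI) := by simp
  show go (mbd (b :: T)) 0 0 none = _
  rw [mbd_cons]
  simp only [go, if_neg hn, if_neg hg']
  refine Prod.ext ?_ ?_ <;> simp

lemma R0 (b : List ℕ) (T : List (List ℕ)) (h0 : b.length % 3 = 0) :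
    fgo (b :: T) = fgo T := by
  show go (mbd (b :: T)) 0 0 none = _
  rw [mbd_cons]
  simp only [go, if_pos h0]
  refine Prod.ext ?_ ?_ <;> simp [fgo]

lemma R2 (b : List ℕ) (T : List (List ℕ)) (h2 : b.length % 3 = 2) :
    fgo (b :: T) = ((fgo T).1, (fgo T).2 + 1) := by
  rw [fstep b T (by omega), h2]
  norm_num
  rw [go_norm, go_zero]
  rfl

lemma go_push (X : List (ℕ × ℕ × ℕ)) (p t s : ℕ)
    (h : ∀ m mx ty rest, X = (m, mx, ty) :: rest → ty = 0 ∨ ¬(p = m - 2 ∧ 2 ≤ m)) :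
    go X t s (some p) = ((go X 0 0 none).1 + t % 2, (go X 0 0 none).2 + s + (t - t % 2) / 2) := by
  cases X with
  | nil => simp only [go]; refine Prod.ext ?_ ?_ <;> simp <;> omega
  | cons d X' =>
    obtain ⟨m, mx, ty⟩ := d
    have hng : ¬((some p : Option ℕ) = some (m - 2) ∧ 2 ≤ m) ∨ ty = 0 := by
      rcases h m mx ty X' rfl with h' | h'
      · exact Or.inr h'
      · left; simp only [Option.some_inj]; exact h'
    have hg' : ¬((none : Option ℕ) = some (m - 2) ∧ 2 ≤ m) := by simp
    by_cases h0 : ty = 0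
    · simp only [go, if_pos h0]
      refine Prod.ext ?_ ?_ <;> simp <;> omega
    · have hng' : ¬((some p : Option ℕ) = some (m - 2) ∧ 2 ≤ m) := by tauto
      simp only [go, if_neg h0, if_neg hng', if_neg hg']
      refine Prod.ext ?_ ?_ <;> simp <;> omega

lemma R1n (b : List ℕ) (T : List (List ℕ)) (h1 : b.length % 3 = 1)
    (h : ∀ b2 rest, T = b2 :: rest →
      b2.length % 3 = 0 ∨ b2.headI ≠ (b.getLast?).getD 0 + 2) :
    fgo (b :: T) = ((fgo T).1 + 1, (fgo T).2) := by
  rw [fstep b T (by omega), h1]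
  norm_num
  rw [go_push]
  · refine Prod.ext ?_ ?_ <;> simp [fgo]
  · intro m mx ty rest hX
    cases T with
    | nil => simp [mbd] at hX
    | cons b2 rest' =>
      rw [mbd_cons] at hX
      obtain ⟨e1, e2, e3⟩ : b2.headI = m ∧ (b2.getLast?).getD 0 = mx ∧ b2.length % 3 = ty := by
        have := (List.cons.injEq _ _ _ _).mp hX
        exact ⟨congrArg (·.1) this.1, congrArg (·.2.1) this.1, congrArg (·.2.2) this.1⟩
      rcases h b2 rest' rfl with h' | h'
      · left; omega
      · right; omega

lemma drop_range' (m k : ℕ) : (List.range' m (k+1)).drop 1 = List.range' (m+1) k := by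
  rw [List.range'_succ]; rfl

lemma R1g (m1 k1 m2 k2 : ℕ) (rest : List (List ℕ))
    (h1 : (k1+1) % 3 = 1) (hm : m2 = m1 + k1 + 2) (h2 : (k2+1) % 3 ≠ 0) :
    fgo (List.range' m1 (k1+1) :: List.range' m2 (k2+1) :: rest)
      = ((fgo ((List.range' m2 (k2+1)).drop 1 :: rest)).1,
         (fgo ((List.range' m2 (k2+1)).drop 1 :: rest)).2 + 1) := by
  have hlast1 : ((List.range' m1 (k1+1)).getLast?).getD 0 = m1 + k1 := by
    rw [getLast?_range']; rfl
  have hlen1 : (List.range' m1 (k1+1)).length = k1 + 1 := by simp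
  rw [fstep _ _ (by rw [hlen1]; omega), hlen1, h1, hlast1]
  norm_num
  rw [mbd_cons]
  have hhead2 : (List.range' m2 (k2+1)).headI = m2 := by rw [List.range'_succ]; rfl
  have hlast2 : ((List.range' m2 (k2+1)).getLast?).getD 0 = m2 + k2 := by
    rw [getLast?_range']; rfl
  have hlen2 : (List.range' m2 (k2+1)).length = k2 + 1 := by simp
  rw [hhead2, hlast2, hlen2]
  have hglue : (some (m1 + k1) : Option ℕ) = some (m2 - 2) ∧ 2 ≤ m2 := by
    constructor
    · congr 1; omega
    · omega
  simp only [go, if_neg h2, if_pos hglue]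
  by_cases hty : (k2+1) % 3 = 1
  · have hk2 : k2 % 3 = 0 := by omega
    rw [if_pos hty, if_neg (by omega : ¬ (k2+1) % 3 = 2)]
    rw [R0 _ rest (by simp [hk2])]
    rw [go_norm, go_zero]
    refine Prod.ext ?_ ?_ <;> simp [fgo]
  · have hty2 : (k2+1) % 3 = 2 := by omega
    have hk2 : k2 % 3 = 1 := by omega
    obtain ⟨j, rfl⟩ : ∃ j, k2 = j + 1 := ⟨k2 - 1, by omega⟩
    rw [if_neg hty, if_pos hty2]
    rw [fstep _ rest (by simp [hk2])]
    have : (List.range' (m2+1) (j+1)).length = j + 1 := by simp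
    rw [this]
    rw [if_pos (by omega : (j+1) % 3 = 1), if_neg (by omega : ¬ (j+1) % 3 = 2)]
    have : ((List.range' (m2+1) (j+1)).getLast?).getD 0 = m2 + (j + 1) := by
      rw [getLast?_range']; simp only [Option.getD_some]; omega
    rw [this]
    rw [go_norm (mbd rest) 1 1, go_norm (mbd rest) 1 0]

lemma ABgo_nil_cons (L : List (List ℕ)) : ABgo ([] :: L) = ABgo L := by
  cases L with
  | nil => simp [ABgo]
  | cons b rest => rw [ABgo]; norm_num

lemma ABgo_cons (b1 b2 : List ℕ) (rest : List (List ℕ)) :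
    ABgo (b1 :: b2 :: rest) =
    if b1.length % 3 = 0 then ABgo (b2 :: rest)
    else if b1.length % 3 = 2 then
      ((ABgo (b2 :: rest)).1, (ABgo (b2 :: rest)).2 ∪ {(b1.getLast?).getD 0 - 1, (b1.getLast?).getD 0})
    else if b2.headI = (b1.getLast?).getD 0 + 2 ∧ b2.length % 3 ≠ 0 then
      ((ABgo (b2.drop 1 :: rest)).1, (ABgo (b2.drop 1 :: rest)).2 ∪ {(b1.getLast?).getD 0, b2.headI})
    else
      ((ABgo (b2 :: rest)).1 ∪ {(b1.getLast?).getD 0}, (ABgo (b2 :: rest)).2) := by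
  rw [ABgo]

lemma ABgo_single (b : List ℕ) : ABgo [b] =
    if b.length % 3 = 1 then ({(b.getLast?).getD 0}, ∅)
    else if b.length % 3 = 2 then (∅, {(b.getLast?).getD 0 - 1, (b.getLast?).getD 0})
    else (∅, ∅) := by
  rw [ABgo]

lemma fgo_nil : fgo [] = (0, 0) := by simp [fgo, mbd, go]

lemma fgo_single (m k : ℕ) : fgo [List.range' m (k+1)] =
    (if (k+1) % 3 = 1 then 1 else 0, if (k+1) % 3 = 2 then 1 else 0) := by
  by_cases h0 : (k+1) % 3 = 0
  · rw [R0 _ _ (by simp [h0]), fgo_nil]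
    rw [if_neg (by omega), if_neg (by omega)]
  · rw [fstep _ _ (by simpa using h0)]
    simp only [List.length_range']
    show go [] _ _ _ = _
    simp only [go]
    by_cases h1 : (k+1) % 3 = 1
    · simp [h1]
    · have h2 : (k+1) % 3 = 2 := by omega
      simp [h1, h2]

lemma mem_range1 (m k i : ℕ) (h : i ≤ k) : m + i ∈ List.range' m (k+1) := by
  exact List.mem_range'.mpr ⟨i, by omega, by ring⟩

lemma valid_tail {b : List ℕ} {rest : List (List ℕ)} (h : Valid (b :: rest)) : Valid rest :=
  h.2.2

lemma valid_lb_tail (b : List ℕ) (rest : List (List ℕ)) (h : Valid (b :: rest)) :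
    ∀ x ∈ rest.flatten, (b.getLast?).getD 0 + 2 ≤ x := by
  obtain ⟨_, hgap, hvr⟩ := h
  intro x hx
  cases rest with
  | nil => simp at hx
  | cons b3 r3 =>
    rcases hgap with h' | h'
    · exact absurd h' (by simp)
    · have := valid_lb _ hvr x hx
      omega

def P (L : List (List ℕ)) : Prop :=
  (ABgo L).1.card = (fgo L).1 ∧
  (ABgo L).2.card = 2 * (fgo L).2 ∧
  (∀ x, (x ∈ (ABgo L).1 ∨ x ∈ (ABgo L).2) → x ∈ L.flatten) ∧
  Disjoint (ABgo L).1 (ABgo L).2 ∧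
  (fgo L).1 + 2 * (fgo L).2 ≤ L.flatten.length ∧
  L.flatten.length % 3 = ((fgo L).1 + 2 * (fgo L).2) % 3

lemma P_nil : P [] := by
  refine ⟨?_, ?_, ?_, ?_, ?_, ?_⟩ <;> simp [ABgo, fgo_nil]

lemma P_single (m k : ℕ) : P [List.range' m (k+1)] := by
  have hlen : (List.range' m (k+1)).length = k+1 := by simp
  have hlast : ((List.range' m (k+1)).getLast?).getD 0 = m + k := by
    rw [getLast?_range']; rfl
  have hflat : ([List.range' m (k+1)] : List (List ℕ)).flatten = List.range' m (k+1) := by simp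
  unfold P
  rw [ABgo_single, fgo_single, hlen, hlast, hflat, hlen]
  by_cases h1 : (k+1) % 3 = 1
  · rw [if_pos h1, if_pos h1, if_neg (by omega)]
    refine ⟨by simp, by simp, ?_, by simp, by simp <;> omega, by simp <;> omega⟩
    intro x hx
    have : x = m + k := by simpa using hx
    subst this
    exact mem_range1 m k k (le_refl k)
  · by_cases h2 : (k+1) % 3 = 2
    · rw [if_neg h1, if_pos h2, if_neg h1, if_pos h2]
      have hk : 1 ≤ k := by omega
      refine ⟨by simp, ?_, ?_, by simp, by simp <;> omega, by simp <;> omega⟩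
      · rw [Finset.card_pair (by omega)]; simp
      · intro x hx
        have : x = m + k - 1 ∨ x = m + k := by simpa using hx
        rcases this with h | h <;> subst h
        · rw [show m + k - 1 = m + (k-1) by omega]
          exact mem_range1 m k (k-1) (by omega)
        · exact mem_range1 m k k (le_refl k)
    · rw [if_neg h1, if_neg h2, if_neg h1, if_neg h2]
      refine ⟨by simp, by simp, by simp, by simp, by simp, by simp <;> omega⟩

lemma main : ∀ (n : ℕ) (L : List (List ℕ)),
    (L.map (fun b => b.length + 1)).sum ≤ n → Valid L → P L := by
  intro n
  induction n with
  | zero =>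
    intro L hm _
    cases L with
    | nil => exact P_nil
    | cons b T =>
      exfalso
      have h1 : (List.map (fun b => b.length + 1) (b :: T)).sum
          = b.length + 1 + (List.map (fun b => b.length + 1) T).sum := by simp
      omega
  | succ n ih =>
    intro L hm hv
    cases L with
    | nil => exact P_nil
    | cons b1 T =>
      cases T with
      | nil =>
        obtain ⟨⟨m, k, rfl⟩, -, -⟩ := hv
        exact P_single m k
      | cons b2 rest =>
        obtain ⟨⟨m1, k1, rfl⟩, hgap, hv2⟩ := hv
        have hlen1 : (List.range' m1 (k1+1)).length = k1+1 := by simp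
        have hlast1 : ((List.range' m1 (k1+1)).getLast?).getD 0 = m1 + k1 := by
          rw [getLast?_range']; rfl
        obtain ⟨⟨m2, k2, rfl⟩, hgap2, hvr⟩ := hv2
        have hv2 : Valid (List.range' m2 (k2+1) :: rest) :=
          ⟨⟨m2, k2, rfl⟩, hgap2, hvr⟩
        have hlen2 : (List.range' m2 (k2+1)).length = k2+1 := by simp
        have hlast2 : ((List.range' m2 (k2+1)).getLast?).getD 0 = m2 + k2 := by
          rw [getLast?_range']; rfl
        have hhead2 : (List.range' m2 (k2+1)).headI = m2 := by
          rw [List.range'_succ]; rfl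
        have hgap' : m1 + k1 + 2 ≤ m2 := by
          rcases hgap with h | h
          · exact absurd h (by simp)
          · rw [hlast1] at h
            have e : ((List.range' m2 (k2+1) :: rest).headI).headI = m2 := hhead2
            omega
        have hlb2 : ∀ x ∈ (List.range' m2 (k2+1) :: rest).flatten, m2 ≤ x := by
          intro x hx
          have := valid_lb _ hv2 x hx
          have e : ((List.range' m2 (k2+1) :: rest).headI).headI = m2 := hhead2
          omega
        have hmtail : ((List.range' m2 (k2+1) :: rest).map (fun b => b.length + 1)).sum ≤ n := by
          simp only [List.map_cons, List.sum_cons, hlen1, hlen2] at hm ⊢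
          omega
        have hfl : (List.range' m1 (k1+1) :: List.range' m2 (k2+1) :: rest).flatten
            = List.range' m1 (k1+1) ++ (List.range' m2 (k2+1) :: rest).flatten :=
          List.flatten_cons
        have hfl_len : (List.range' m1 (k1+1) :: List.range' m2 (k2+1) :: rest).flatten.length
            = (k1+1) + (List.range' m2 (k2+1) :: rest).flatten.length := by
          rw [hfl]; simp
        unfold P
        rw [ABgo_cons, hlen1, hlast1, hhead2, hlen2]
        by_cases hty0 : (k1+1) % 3 = 0
        · rw [if_pos hty0, R0 _ _ (by rw [hlen1]; exact hty0)]
          obtain ⟨T1, T2, T3, T4, T5, T6⟩ := ih _ hmtail hv2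
          refine ⟨T1, T2, ?_, T4, ?_, ?_⟩
          · intro x hx
            rw [hfl, List.mem_append]
            exact Or.inr (T3 x hx)
          · omega
          · omega
        · by_cases hty2 : (k1+1) % 3 = 2
          · rw [if_neg (by omega), if_pos hty2, R2 _ _ (by rw [hlen1]; exact hty2)]
            obtain ⟨T1, T2, T3, T4, T5, T6⟩ := ih _ hmtail hv2
            have hk1 : 1 ≤ k1 := by omega
            have hub : ∀ x, (x ∈ (ABgo (List.range' m2 (k2+1) :: rest)).1 ∨
                x ∈ (ABgo (List.range' m2 (k2+1) :: rest)).2) → m2 ≤ x :=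
              fun x hx => hlb2 x (T3 x hx)
            have hdis2 : Disjoint (ABgo (List.range' m2 (k2+1) :: rest)).2
                ({m1 + k1 - 1, m1 + k1} : Finset ℕ) := by
              rw [Finset.disjoint_left]
              intro x hx hx2
              have := hub x (Or.inr hx)
              simp only [Finset.mem_insert, Finset.mem_singleton] at hx2
              omega
            refine ⟨by dsimp only; exact T1, ?_, ?_, ?_, ?_, ?_⟩
            · dsimp only
              rw [Finset.card_union_of_disjoint hdis2, Finset.card_pair (by omega), T2]
              omega
            · intro x hx
              rw [hfl, List.mem_append]
              rcases hx with hx | hx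
              · exact Or.inr (T3 x (Or.inl hx))
              · rcases Finset.mem_union.mp hx with hx | hx
                · exact Or.inr (T3 x (Or.inr hx))
                · simp only [Finset.mem_insert, Finset.mem_singleton] at hx
                  rcases hx with rfl | rfl
                  · refine Or.inl ?_
                    rw [show m1 + k1 - 1 = m1 + (k1 - 1) by omega]
                    exact mem_range1 m1 k1 (k1-1) (by omega)
                  · exact Or.inl (mem_range1 m1 k1 k1 (le_refl k1))
            · rw [Finset.disjoint_union_right]
              refine ⟨T4, ?_⟩
              rw [Finset.disjoint_left]
              intro x hx hx2
              have := hub x (Or.inl hx)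
              simp only [Finset.mem_insert, Finset.mem_singleton] at hx2
              omega
            · dsimp only; omega
            · dsimp only; omega
          · have hty1 : (k1+1) % 3 = 1 := by omega
            by_cases hg : m2 = m1 + k1 + 2 ∧ (k2+1) % 3 ≠ 0
            · -- gluable case
              rw [if_neg (by omega), if_neg (by omega), if_pos hg, drop_range']
              rw [R1g m1 k1 m2 k2 rest hty1 hg.1 hg.2, drop_range']
              have key : P (List.range' (m2+1) k2 :: rest) ∧
                  (∀ x ∈ (List.range' (m2+1) k2 :: rest).flatten, m2 + 1 ≤ x) := by
                rcases Nat.eq_zero_or_pos k2 with hk2 | hk2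
                · subst hk2
                  have e0 : List.range' (m2+1) 0 = ([] : List ℕ) := rfl
                  have hmr : (rest.map (fun b => b.length + 1)).sum ≤ n := by
                    simp only [List.map_cons, List.sum_cons] at hmtail
                    omega
                  obtain ⟨T1, T2, T3, T4, T5, T6⟩ := ih _ hmr hvr
                  have efl : (List.range' (m2+1) 0 :: rest).flatten = rest.flatten := by
                    rw [e0]; simp
                  constructor
                  · unfold P
                    rw [e0, ABgo_nil_cons, R0 [] rest (by simp)]
                    simp only [List.flatten_cons, List.nil_append]
                    exact ⟨T1, T2, fun x hx => T3 x hx, T4, T5, T6⟩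
                  · intro x hx
                    rw [efl] at hx
                    have := valid_lb_tail _ _ hv2 x hx
                    rw [hlast2] at this
                    omega
                · obtain ⟨j, rfl⟩ : ∃ j, k2 = j + 1 := ⟨k2 - 1, by omega⟩
                  have hlastd : ((List.range' (m2+1) (j+1)).getLast?).getD 0 = m2 + (j+1) := by
                    rw [getLast?_range']; simp only [Option.getD_some]; omega
                  have hvd : Valid (List.range' (m2+1) (j+1) :: rest) := by
                    refine ⟨⟨m2+1, j, rfl⟩, ?_, hvr⟩
                    rcases hgap2 with h | h
                    · exact Or.inl h
                    · refine Or.inr ?_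
                      rw [hlastd]
                      rw [hlast2] at h
                      omega
                  have hmd : ((List.range' (m2+1) (j+1) :: rest).map (fun b => b.length + 1)).sum ≤ n := by
                    simp only [List.map_cons, List.sum_cons, List.length_range'] at hmtail ⊢
                    omega
                  refine ⟨ih _ hmd hvd, ?_⟩
                  intro x hx
                  have := valid_lb _ hvd x hx
                  have e : ((List.range' (m2+1) (j+1) :: rest).headI).headI = m2 + 1 := by
                    rw [List.range'_succ]; rfl
                  omega
              obtain ⟨⟨T1, T2, T3, T4, T5, T6⟩, hlbd⟩ := key
              have hub : ∀ x, (x ∈ (ABgo (List.range' (m2+1) k2 :: rest)).1 ∨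
                  x ∈ (ABgo (List.range' (m2+1) k2 :: rest)).2) → m2 + 1 ≤ x :=
                fun x hx => hlbd x (T3 x hx)
              have hdis2 : Disjoint (ABgo (List.range' (m2+1) k2 :: rest)).2
                  ({m1 + k1, m2} : Finset ℕ) := by
                rw [Finset.disjoint_left]
                intro x hx hx2
                have := hub x (Or.inr hx)
                simp only [Finset.mem_insert, Finset.mem_singleton] at hx2
                omega
              have hsub : ∀ x ∈ (List.range' (m2+1) k2 :: rest).flatten,
                  x ∈ (List.range' m2 (k2+1) :: rest).flatten := by
                intro x hx
                rw [List.flatten_cons] at hx ⊢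
                rcases List.mem_append.mp hx with h | h
                · refine List.mem_append.mpr (Or.inl ?_)
                  obtain ⟨i, hi, rfl⟩ := List.mem_range'.mp h
                  have : m2 + 1 + 1 * i = m2 + (i+1) := by omega
                  rw [this]
                  exact mem_range1 m2 k2 (i+1) (by omega)
                · exact List.mem_append.mpr (Or.inr h)
              have hfld : (List.range' (m2+1) k2 :: rest).flatten.length
                  = k2 + rest.flatten.length := by simp
              have hfl_len2 : (List.range' m2 (k2+1) :: rest).flatten.length
                  = (k2+1) + rest.flatten.length := by simp
              refine ⟨by dsimp only; exact T1, ?_, ?_, ?_, ?_, ?_⟩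
              · dsimp only
                rw [Finset.card_union_of_disjoint hdis2, Finset.card_pair (by omega), T2]
                omega
              · intro x hx
                rw [hfl, List.mem_append]
                rcases hx with hx | hx
                · exact Or.inr (hsub x (T3 x (Or.inl hx)))
                · rcases Finset.mem_union.mp hx with hx | hx
                  · exact Or.inr (hsub x (T3 x (Or.inr hx)))
                  · simp only [Finset.mem_insert, Finset.mem_singleton] at hx
                    rcases hx with rfl | hx2
                    · exact Or.inl (mem_range1 m1 k1 k1 (le_refl k1))
                    · refine Or.inr ?_
                      rw [List.flatten_cons, List.mem_append, hx2]
                      exact Or.inl (by simpa using mem_range1 m2 k2 0 (by omega))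
              · rw [Finset.disjoint_union_right]
                refine ⟨T4, ?_⟩
                rw [Finset.disjoint_left]
                intro x hx hx2
                have := hub x (Or.inl hx)
                simp only [Finset.mem_insert, Finset.mem_singleton] at hx2
                omega
              · dsimp only; omega
              · dsimp only; omega
            · -- non-gluable case
              rw [if_neg (by omega), if_neg (by omega), if_neg hg]
              have hR : fgo (List.range' m1 (k1+1) :: List.range' m2 (k2+1) :: rest)
                  = ((fgo (List.range' m2 (k2+1) :: rest)).1 + 1,
                     (fgo (List.range' m2 (k2+1) :: rest)).2) := by
                refine R1n _ _ (by rw [hlen1]; exact hty1) ?_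
                intro b2' rest' he
                have hb2' : b2' = List.range' m2 (k2+1) := (((List.cons.injEq _ _ _ _).mp he).1).symm
                subst hb2'
                rw [hhead2, hlen2, hlast1]
                by_cases h0 : (k2+1) % 3 = 0
                · exact Or.inl h0
                · refine Or.inr ?_
                  intro hc
                  exact hg ⟨hc, h0⟩
              rw [hR]
              obtain ⟨T1, T2, T3, T4, T5, T6⟩ := ih _ hmtail hv2
              have hub : ∀ x, (x ∈ (ABgo (List.range' m2 (k2+1) :: rest)).1 ∨
                  x ∈ (ABgo (List.range' m2 (k2+1) :: rest)).2) → m2 ≤ x :=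
                fun x hx => hlb2 x (T3 x hx)
              have hdis1 : Disjoint (ABgo (List.range' m2 (k2+1) :: rest)).1
                  ({m1 + k1} : Finset ℕ) := by
                rw [Finset.disjoint_left]
                intro x hx hx2
                have := hub x (Or.inl hx)
                simp only [Finset.mem_singleton] at hx2
                omega
              refine ⟨?_, by dsimp only; exact T2, ?_, ?_, ?_, ?_⟩
              · dsimp only
                rw [Finset.card_union_of_disjoint hdis1, Finset.card_singleton, T1]
              · intro x hx
                rw [hfl, List.mem_append]
                rcases hx with hx | hx
                · rcases Finset.mem_union.mp hx with hx | hx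
                  · exact Or.inr (T3 x (Or.inl hx))
                  · simp only [Finset.mem_singleton] at hx
                    subst hx
                    exact Or.inl (mem_range1 m1 k1 k1 (le_refl k1))
                · exact Or.inr (T3 x (Or.inr hx))
              · rw [Finset.disjoint_union_left]
                refine ⟨T4, ?_⟩
                rw [Finset.disjoint_left]
                intro x hx hx2
                have := hub x (Or.inr hx2)
                simp only [Finset.mem_singleton] at hx
                omega
              · dsimp only; omega
              · dsimp only; omega

theorem card_A_B_C (Δ : Finset ℕ) (hne : Δ.Nonempty) :
    (AF Δ).card = aF Δ ∧ (BF Δ).card = 2 * bF Δ ∧ (CF Δ).card = 3 * cF Δ := by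
  have hsort : (Δ.sort (· ≤ ·)).Pairwise (· < ·) := Δ.sortedLT_sort.pairwise
  have hv := valid_runs _ hsort
  obtain ⟨H1, H2, H3, H4, H5, H6⟩ :=
    main (((runs (Δ.sort (· ≤ ·))).map (fun b => b.length + 1)).sum)
      (runs (Δ.sort (· ≤ ·))) (le_refl _) hv
  have hfl := runs_flatten (Δ.sort (· ≤ ·))
  have haf : aF Δ = (fgo (runs (Δ.sort (· ≤ ·)))).1 := rfl
  have hbf : bF Δ = (fgo (runs (Δ.sort (· ≤ ·)))).2 := rfl
  have hA : AF Δ = (ABgo (runs (Δ.sort (· ≤ ·)))).1 := rfl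
  have hB : BF Δ = (ABgo (runs (Δ.sort (· ≤ ·)))).2 := rfl
  have hsub : AF Δ ∪ BF Δ ⊆ Δ := by
    intro x hx
    rcases Finset.mem_union.mp hx with hx | hx
    · have := H3 x (Or.inl (hA ▸ hx))
      rw [hfl] at this
      exact (Finset.mem_sort _).mp this
    · have := H3 x (Or.inr (hB ▸ hx))
      rw [hfl] at this
      exact (Finset.mem_sort _).mp this
  have hcardU : (AF Δ ∪ BF Δ).card = aF Δ + 2 * bF Δ := by
    rw [hA, hB, Finset.card_union_of_disjoint H4, H1, H2, haf, hbf]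
  have hclen : Δ.card = (runs (Δ.sort (· ≤ ·))).flatten.length := by
    rw [hfl]; exact (Finset.length_sort _).symm
  have hle : aF Δ + 2 * bF Δ ≤ Δ.card := by rw [haf, hbf, hclen]; exact H5
  have hmod : Δ.card % 3 = (aF Δ + 2 * bF Δ) % 3 := by rw [haf, hbf, hclen]; exact H6
  refine ⟨by rw [hA, H1, ← haf], by rw [hB, H2, ← hbf], ?_⟩
  have h7 : (CF Δ).card = Δ.card - (aF Δ + 2 * bF Δ) := by
    unfold CF
    rw [Finset.card_sdiff_of_subset hsub, hcardU]
  unfold cF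
  omega
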